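/- arXiv:1801.02932 — 6 statements merged into one kernel-verified Lean document; each statement's English description precedes it below -/
import Mathlib

section
/- Let R be a commutative ring that is a ℚ-algebra, let g(x) = c_0 + c_1 x + ⋯ + c_l x^l ∈ R[x] be a polynomial of degree at most l, and let f_0 ∈ R. For 1 ≤ m ≤ l+1 define f_m = ∑_{k=0}^{l+1-m} (c_{m+k-1}/(m+k)) · B_k · C(m+k, k) ∈ R, where B_k denotes the k-th Bernoulli number and C(·,·) the binomial coefficient. Then the polynomial f(x) = f_0 + f_1 x + ⋯ + f_{l+1} x^{l+1} ∈ R[x] satisfies f(0) = f_0 and f(x+1) = f(x) + g(x) for every natural number x ≥ 0. -/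
open Polynomial Finset

/-- Lemma 3.2 (recursion form): if `g = c₀ + c₁ x + ⋯ + c_l x^l ∈ R[x]`, `f₀ ∈ R`, and for
`1 ≤ m ≤ l+1` we set `f_m = ∑_{k=0}^{l+1-m} (c_{m+k-1} / (m+k)) · B_k · C(m+k, k)`, then
`f = f₀ + f₁ x + ⋯ + f_{l+1} x^{l+1}` satisfies `f(0) = f₀` and `f(x+1) = f(x) + g(x)`
for every natural number `x`. -/
theorem bernoulli_solves_recursion (R : Type*) [CommRing R] [Algebra ℚ R]
    (l : ℕ) (c : ℕ → R) (f0 : R)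
    (g : Polynomial R)
    (hg : g = ∑ k ∈ range (l + 1), C (c k) * X ^ k)
    (fm : ℕ → R)
    (hfm : ∀ m, 1 ≤ m → m ≤ l + 1 →
      fm m = ∑ k ∈ range (l + 2 - m),
        algebraMap ℚ R (_root_.bernoulli k * ((m + k).choose k : ℚ) / (m + k)) * c (m + k - 1))
    (f : Polynomial R)
    (hf : f = C f0 + ∑ m ∈ Icc 1 (l + 1), C (fm m) * X ^ m) :
    f.eval 0 = f0 ∧ ∀ x : ℕ, f.eval ((x : R) + 1) = f.eval (x : R) + g.eval (x : R) := by
  have key : ∀ x : ℕ, f.eval (x : R) = f0 + ∑ t ∈ range x, g.eval (t : R) := by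
    intro x
    rw [hf, hg]
    simp only [eval_add, eval_finset_sum, eval_mul, eval_C, eval_pow, eval_X]
    congr 1
    have hRHS : ∑ t ∈ range x, ∑ j ∈ range (l + 1), c j * (t : R) ^ j
        = ∑ j ∈ range (l + 1), ∑ i ∈ range (j + 1),
            algebraMap ℚ R (_root_.bernoulli i * (((j : ℕ) + 1).choose i : ℚ) / ((j : ℚ) + 1))
              * c j * (x : R) ^ (j + 1 - i) := by
      rw [Finset.sum_comm]
      refine Finset.sum_congr rfl fun j _ => ?_
      have h1 : ∑ t ∈ range x, c j * (t : R) ^ j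
          = c j * algebraMap ℚ R (∑ t ∈ range x, (t : ℚ) ^ j) := by
        rw [← Finset.mul_sum, map_sum]
        congr 1
        refine Finset.sum_congr rfl fun t _ => ?_
        rw [map_pow, map_natCast]
      rw [h1, sum_range_pow, map_sum, Finset.mul_sum]
      refine Finset.sum_congr rfl fun i _ => ?_
      have h2 : _root_.bernoulli i * (((j : ℕ) + 1).choose i : ℚ) * (x : ℚ) ^ (j + 1 - i) / ((j : ℚ) + 1)
          = _root_.bernoulli i * (((j : ℕ) + 1).choose i : ℚ) / ((j : ℚ) + 1) * (x : ℚ) ^ (j + 1 - i) := by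
        ring
      rw [h2, map_mul, map_pow, map_natCast]
      ring
    rw [hRHS]
    have hLHS : ∑ m ∈ Icc 1 (l + 1), fm m * (x : R) ^ m
        = ∑ m ∈ Icc 1 (l + 1), ∑ k ∈ range (l + 2 - m),
            algebraMap ℚ R (_root_.bernoulli k * ((m + k).choose k : ℚ) / ((m : ℚ) + k)) * c (m + k - 1)
              * (x : R) ^ m := by
      refine Finset.sum_congr rfl fun m hm => ?_
      rw [mem_Icc] at hm
      rw [hfm m hm.1 hm.2, Finset.sum_mul]
    rw [hLHS, Finset.sum_sigma', Finset.sum_sigma']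
    refine Finset.sum_nbij' (fun p => ⟨p.1 + p.2 - 1, p.2⟩) (fun p => ⟨p.1 + 1 - p.2, p.2⟩)
      ?_ ?_ ?_ ?_ ?_
    · rintro ⟨m, k⟩ hp
      simp only [mem_sigma, mem_Icc, mem_range] at hp ⊢
      omega
    · rintro ⟨j, i⟩ hp
      simp only [mem_sigma, mem_Icc, mem_range] at hp ⊢
      omega
    · rintro ⟨m, k⟩ hp
      simp only [mem_sigma, mem_Icc, mem_range] at hp
      show (⟨m + k - 1 + 1 - k, k⟩ : (_ : ℕ) × ℕ) = ⟨m, k⟩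
      have : m + k - 1 + 1 - k = m := by omega
      rw [this]
    · rintro ⟨j, i⟩ hp
      simp only [mem_sigma, mem_Icc, mem_range] at hp
      show (⟨j + 1 - i + i - 1, i⟩ : (_ : ℕ) × ℕ) = ⟨j, i⟩
      have : j + 1 - i + i - 1 = j := by omega
      rw [this]
    · rintro ⟨m, k⟩ hp
      simp only [mem_sigma, mem_Icc, mem_range] at hp
      obtain ⟨⟨hm1, hm2⟩, hk⟩ := hp
      have e1 : m + k - 1 + 1 = m + k := by omega
      have e2 : m + k - 1 + 1 - k = m := by omega
      simp only [e1, e2]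
      have e3 : ((m : ℚ) + k) = ((m + k - 1 : ℕ) : ℚ) + 1 := by
        push_cast [Nat.cast_sub (by omega : 1 ≤ m + k)]
        ring
      rw [e3]
      have e4 : m + k - k = m := by omega
      rw [e4]
  constructor
  · have h0 := key 0
    simpa using h0
  · intro x
    have h1 := key (x + 1)
    push_cast at h1
    rw [h1, key x, Finset.sum_range_succ]
    ring
end

section
/- Let R be a commutative ring that is a ℚ-algebra, let g(x) = c_0 + c_1 x + ⋯ + c_l x^l ∈ R[x] and f_0 ∈ R, and for 1 ≤ m ≤ l+1 define f_m = ∑_{k=0}^{l+1-m} (c_{m+k-1}/(m+k)) · B_k · C(m+k, k) ∈ R, where B_k denotes the k-th Bernoulli number. Then the polynomial f(x) = f_0 + f_1 x + ⋯ + f_{l+1} x^{l+1} satisfies f(x) = f_0 + ∑_{i=0}^{x−1} g(i) for every natural number x ≥ 0 (the empty sum for x = 0 being 0). -/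
open Polynomial Finset

lemma tri_sum {M : Type*} [AddCommMonoid M] (n : ℕ) (F : ℕ → ℕ → M) :
    ∑ m ∈ Finset.range n, ∑ k ∈ Finset.range (n - m), F m k
      = ∑ j ∈ Finset.range n, ∑ k ∈ Finset.range (j + 1), F (j - k) k := by
  rw [Finset.sum_sigma', Finset.sum_sigma']
  refine Finset.sum_nbij' (fun p : Σ _ : ℕ, ℕ => (⟨p.1 + p.2, p.2⟩ : Σ _ : ℕ, ℕ))
    (fun p : Σ _ : ℕ, ℕ => (⟨p.1 - p.2, p.2⟩ : Σ _ : ℕ, ℕ)) ?_ ?_ ?_ ?_ ?_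
  · rintro ⟨a, b⟩ h
    simp only [Finset.mem_sigma, Finset.mem_range] at h ⊢
    omega
  · rintro ⟨a, b⟩ h
    simp only [Finset.mem_sigma, Finset.mem_range] at h ⊢
    omega
  · rintro ⟨a, b⟩ h
    simp
  · rintro ⟨a, b⟩ h
    simp only [Finset.mem_sigma, Finset.mem_range] at h
    have : a - b + b = a := by omega
    simp [this]
  · rintro ⟨a, b⟩ h
    simp

/-- Lemma 3.2 (summation form): with `g = c₀ + c₁ x + ⋯ + c_l x^l ∈ R[x]`, `f₀ ∈ R`, and
`f_m = ∑_{k=0}^{l+1-m} (c_{m+k-1} / (m+k)) · B_k · C(m+k, k)` for `1 ≤ m ≤ l+1`, the polynomial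
`f = f₀ + f₁ x + ⋯ + f_{l+1} x^{l+1}` satisfies `f(x) = f₀ + ∑_{i=0}^{x-1} g(i)` for every
natural number `x`. -/
theorem bernoulli_solves_summation (R : Type*) [CommRing R] [Algebra ℚ R]
    (l : ℕ) (c : ℕ → R) (f0 : R)
    (g : Polynomial R)
    (hg : g = ∑ k ∈ range (l + 1), C (c k) * X ^ k)
    (fm : ℕ → R)
    (hfm : ∀ m, 1 ≤ m → m ≤ l + 1 →
      fm m = ∑ k ∈ range (l + 2 - m),
        algebraMap ℚ R (_root_.bernoulli k * ((m + k).choose k : ℚ) / (m + k)) * c (m + k - 1))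
    (f : Polynomial R)
    (hf : f = C f0 + ∑ m ∈ Icc 1 (l + 1), C (fm m) * X ^ m) :
    ∀ x : ℕ, f.eval (x : R) = f0 + ∑ i ∈ range x, g.eval (i : R) := by
  intro x
  subst hg hf
  simp only [eval_add, eval_finset_sum, eval_mul, eval_C, eval_pow, eval_X]
  congr 1
  rw [Finset.sum_comm]
  have hIcc : Icc 1 (l + 1) = Ico 1 (l + 2) := by exact (Finset.Ico_add_one_right_eq_Icc (a := 1) (b := l + 1)).symm
  rw [hIcc, Finset.sum_Ico_eq_sum_range]
  have h1 : ∀ m' ∈ range (l + 1), fm (1 + m') * (x : R) ^ (1 + m')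
      = ∑ k ∈ range (l + 1 - m'),
          algebraMap ℚ R (_root_.bernoulli k * (((1 + m') + k).choose k : ℚ)
              / (((1 + m' : ℕ) : ℚ) + (k : ℚ)))
            * c (1 + m' + k - 1) * (x : R) ^ (1 + m') := by
    intro m' hm'
    simp only [Finset.mem_range] at hm'
    rw [hfm (1 + m') (by omega) (by omega), Finset.sum_mul,
      show l + 2 - (1 + m') = l + 1 - m' from by omega]
  rw [show l + 2 - 1 = l + 1 from rfl]
  rw [Finset.sum_congr rfl h1]
  rw [tri_sum (l + 1)
    (fun m' k => algebraMap ℚ R (_root_.bernoulli k * (((1 + m') + k).choose k : ℚ)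
        / (((1 + m' : ℕ) : ℚ) + (k : ℚ))) * c (1 + m' + k - 1) * (x : R) ^ (1 + m'))]
  refine Finset.sum_congr rfl fun j hj => ?_
  simp only [Finset.mem_range] at hj
  have key : ∀ k ∈ range (j + 1),
      algebraMap ℚ R (_root_.bernoulli k * (((1 + (j - k)) + k).choose k : ℚ)
          / (((1 + (j - k) : ℕ) : ℚ) + (k : ℚ))) * c (1 + (j - k) + k - 1) * (x : R) ^ (1 + (j - k))
      = algebraMap ℚ R (_root_.bernoulli k * (((j + 1).choose k : ℚ)) * (x : ℚ) ^ (j + 1 - k)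
          / ((j : ℚ) + 1)) * c j := by
    intro k hk
    simp only [Finset.mem_range] at hk
    have hc : 1 + (j - k) + k = j + 1 := by omega
    have he : 1 + (j - k) = j + 1 - k := by omega
    rw [hc, he]
    have hden : ((j + 1 - k : ℕ) : ℚ) + (k : ℚ) = (j : ℚ) + 1 := by
      rw [Nat.cast_sub (by omega)]
      push_cast
      ring
    rw [hden]
    have hx : ((x : R)) ^ (j + 1 - k) = algebraMap ℚ R ((x : ℚ) ^ (j + 1 - k)) := by
      rw [map_pow, map_natCast]
    rw [show j + 1 - 1 = j from by omega, hx, mul_right_comm, ← map_mul]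
    congr 1
    ring_nf
  rw [Finset.sum_congr rfl key, ← Finset.sum_mul, ← map_sum, ← _root_.sum_range_pow x j, map_sum]
  rw [mul_comm, Finset.mul_sum]
  refine Finset.sum_congr rfl fun i hi => ?_
  rw [map_pow, map_natCast, mul_comm]
end

section
/- For every family of integers t = (t_{i,j,k})_{1 ≤ i < j < k ≤ n}, the normal form map N_t : ℤ^n → G(t), (x_1, …, x_n) ↦ a_1^{x_1} ⋯ a_n^{x_n}, is surjective; that is, every element of G(t) can be written as a_1^{x_1} ⋯ a_n^{x_n} for some x ∈ ℤ^n. -/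
namespace HallPoly

/-- The ordered product `g_1^{e_1} ⋯ g_n^{e_n}` taken in increasing order of indices. -/
def prodPow {Γ : Type*} [Group Γ] (n : ℕ) (g : Fin n → Γ) (e : Fin n → ℤ) : Γ :=
  ((List.finRange n).map fun k => g k ^ e k).prod

/-- The relators of the presented group `G(t)`:
`(a_i · a_j · a_{j+1}^{t_{i,j,j+1}} ⋯ a_n^{t_{i,j,n}})⁻¹ · (a_j · a_i)` for `1 ≤ i < j ≤ n`. -/
def rels (n : ℕ) (t : Fin n → Fin n → Fin n → ℤ) : Set (FreeGroup (Fin n)) :=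
  { r | ∃ i j : Fin n, i < j ∧
      r = (FreeGroup.of i * FreeGroup.of j *
            prodPow n FreeGroup.of (fun k => if j < k then t i j k else 0))⁻¹ *
          (FreeGroup.of j * FreeGroup.of i) }

/-- The presented group `G(t)` with generators `a_1, …, a_n` and relations
`a_j·a_i = a_i·a_j·a_{j+1}^{t_{i,j,j+1}} ⋯ a_n^{t_{i,j,n}}` for `1 ≤ i < j ≤ n`. -/
abbrev G (n : ℕ) (t : Fin n → Fin n → Fin n → ℤ) : Type := PresentedGroup (rels n t)

/-- The generators `a_1, …, a_n` of `G(t)`. -/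
def a (n : ℕ) (t : Fin n → Fin n → Fin n → ℤ) (i : Fin n) : G n t :=
  PresentedGroup.of i

/-- The normal form map `N_t : ℤⁿ → G(t)`, `x ↦ a_1^{x_1} ⋯ a_n^{x_n}`. -/
def N (n : ℕ) (t : Fin n → Fin n → Fin n → ℤ) (x : Fin n → ℤ) : G n t :=
  prodPow n (a n t) x

section Aux

variable {n : ℕ} {t : Fin n → Fin n → Fin n → ℤ}

/-- The correction term `c(i,j) = a_{j+1}^{t_{i,j,j+1}} ⋯ a_n^{t_{i,j,n}}`. -/
def cc (t : Fin n → Fin n → Fin n → ℤ) (i j : Fin n) : G n t :=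
  prodPow n (a n t) (fun k => if j < k then t i j k else 0)

/-- The subgroup generated by the generators of index `≥ m`. -/
def Hgp (t : Fin n → Fin n → Fin n → ℤ) (m : ℕ) : Subgroup (G n t) :=
  Subgroup.closure {g | ∃ j : Fin n, m ≤ (j : ℕ) ∧ g = a n t j}

lemma a_mem_H {m : ℕ} {j : Fin n} (h : m ≤ (j : ℕ)) : a n t j ∈ Hgp t m :=
  Subgroup.subset_closure ⟨j, h, rfl⟩

lemma H_le {m m' : ℕ} (h : m ≤ m') : Hgp t m' ≤ Hgp (n := n) t m := by
  apply Subgroup.closure_mono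
  rintro g ⟨j, hj, rfl⟩
  exact ⟨j, h.trans hj, rfl⟩

lemma mk_prodPow (f : Fin n → ℤ) :
    (QuotientGroup.mk (prodPow n FreeGroup.of f) : G n t) = prodPow n (a n t) f := by
  show (QuotientGroup.mk' (Subgroup.normalClosure (rels n t))) (prodPow n FreeGroup.of f)
      = prodPow n (a n t) f
  unfold prodPow
  rw [map_list_prod, List.map_map]
  have he : ((QuotientGroup.mk' (Subgroup.normalClosure (rels n t))) ∘ fun k => FreeGroup.of k ^ f k)
      = fun k : Fin n => a n t k ^ f k := by
    funext k
    simp only [Function.comp_apply, map_zpow]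
    rfl
  rw [he]
  rfl

lemma relation (i j : Fin n) (hij : i < j) :
    a n t j * a n t i = a n t i * a n t j * cc t i j := by
  have hr : (FreeGroup.of i * FreeGroup.of j *
        prodPow n FreeGroup.of (fun k => if j < k then t i j k else 0))⁻¹ *
        (FreeGroup.of j * FreeGroup.of i) ∈ Subgroup.normalClosure (rels n t) :=
    Subgroup.subset_normalClosure ⟨i, j, hij, rfl⟩
  have h1 := (QuotientGroup.eq_one_iff _).mpr hr
  have ha : ∀ i : Fin n, (QuotientGroup.mk (FreeGroup.of i) : G n t) = a n t i := fun _ => rfl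
  simp only [QuotientGroup.mk_mul, QuotientGroup.mk_inv, mk_prodPow, ha] at h1
  exact (inv_mul_eq_one.mp h1).symm

lemma cc_mem (i j : Fin n) : cc t i j ∈ Hgp t ((j : ℕ) + 1) := by
  refine Subgroup.list_prod_mem _ ?_
  intro g hg
  obtain ⟨k, _, rfl⟩ := List.mem_map.mp hg
  show a n t k ^ (if j < k then t i j k else 0) ∈ Hgp t ((j : ℕ) + 1)
  by_cases h : j < k
  · rw [if_pos h]
    exact zpow_mem (a_mem_H (by omega)) _
  · rw [if_neg h]
    simpa using one_mem (Hgp t ((j : ℕ) + 1))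

lemma conj_mem {g : G n t} {m m' : ℕ}
    (hg : ∀ j : Fin n, m ≤ (j : ℕ) → g * a n t j * g⁻¹ ∈ Hgp t m') :
    ∀ x ∈ Hgp t m, g * x * g⁻¹ ∈ Hgp t m' := by
  intro x hx
  induction hx using Subgroup.closure_induction with
  | mem x hx =>
    obtain ⟨j, hj, rfl⟩ := hx
    exact hg j hj
  | one => simpa using (Hgp t m').one_mem
  | mul x y _ _ hx hy =>
    have := mul_mem hx hy
    have e : g * x * g⁻¹ * (g * y * g⁻¹) = g * (x * y) * g⁻¹ := by group
    rwa [e] at this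
  | inv x _ hx =>
    have := inv_mem hx
    have e : (g * x * g⁻¹)⁻¹ = g * x⁻¹ * g⁻¹ := by group
    rwa [e] at this

lemma conjPos (d : ℕ) : ∀ j : Fin n, n - (j : ℕ) = d → ∀ i : Fin n, i < j →
    a n t i * a n t j * (a n t i)⁻¹ ∈ Hgp t (j : ℕ) := by
  induction d using Nat.strong_induction_on with
  | _ d IH =>
  intro j hd i hij
  have hrel := relation (t := t) i j hij
  have h2 : a n t i * a n t j * (a n t i)⁻¹
      = a n t j * (a n t i * (cc t i j)⁻¹ * (a n t i)⁻¹) := by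
    have h3 : a n t i * a n t j = a n t j * a n t i * (cc t i j)⁻¹ := by
      rw [hrel]; group
    rw [show a n t i * a n t j * (a n t i)⁻¹ = (a n t i * a n t j) * (a n t i)⁻¹ from rfl, h3]
    group
  rw [h2]
  refine mul_mem (a_mem_H le_rfl) (H_le (Nat.le_succ _) ?_)
  refine conj_mem ?_ _ (inv_mem (cc_mem i j))
  intro k hk
  have hjk : j < k := by rw [Fin.lt_def]; omega
  have hik : i < k := hij.trans hjk
  have hlt : n - (k : ℕ) < d := by have := k.isLt; omega
  exact H_le hk (IH _ hlt k rfl i hik)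

lemma conjNeg {i j : Fin n} (hij : i < j) :
    (a n t i)⁻¹ * a n t j * a n t i ∈ Hgp t (j : ℕ) := by
  have hrel := relation (t := t) i j hij
  have e : (a n t i)⁻¹ * a n t j * a n t i = a n t j * cc t i j := by
    rw [mul_assoc, hrel]; group
  rw [e]
  exact mul_mem (a_mem_H le_rfl) (H_le (Nat.le_succ _) (cc_mem i j))

/-- Tail normal form: the product of `a_k ^ x_k` over `k ≥ m`. -/
def T (t : Fin n → Fin n → Fin n → ℤ) (m : ℕ) (x : Fin n → ℤ) : G n t :=
  ((List.finRange n).map fun k : Fin n => if m ≤ (k : ℕ) then a n t k ^ x k else 1).prod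

lemma mem_take_lt {c : ℕ} {k : Fin n} (h : k ∈ (List.finRange n).take c) : (k : ℕ) < c := by
  obtain ⟨p, hp, he⟩ := List.mem_iff_getElem.mp h
  have hp' : p < c := by
    have := hp; simp [List.length_take] at this; omega
  rw [List.getElem_take, List.getElem_finRange] at he
  rw [← he]
  simpa using hp'

lemma mem_drop_le {c : ℕ} {k : Fin n} (h : k ∈ (List.finRange n).drop c) : c ≤ (k : ℕ) := by
  obtain ⟨p, hp, he⟩ := List.mem_iff_getElem.mp h
  rw [List.getElem_drop, List.getElem_finRange] at he
  rw [← he]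
  simp

lemma T_congr {m : ℕ} {x y : Fin n → ℤ} (h : ∀ k : Fin n, m ≤ (k : ℕ) → x k = y k) :
    T t m x = T t m y := by
  unfold T
  congr 1
  apply List.map_congr_left
  intro k _
  by_cases hk : m ≤ (k : ℕ)
  · rw [if_pos hk, if_pos hk, h k hk]
  · rw [if_neg hk, if_neg hk]

lemma T_zero (m : ℕ) : T (n := n) t m (fun _ => 0) = 1 := by
  apply List.prod_eq_one
  intro g hg
  obtain ⟨k, _, rfl⟩ := List.mem_map.mp hg
  by_cases hk : m ≤ (k : ℕ) <;> simp [hk]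

lemma T_mem {m : ℕ} {x : Fin n → ℤ} : T t m x ∈ Hgp t m := by
  refine Subgroup.list_prod_mem _ ?_
  intro g hg
  obtain ⟨k, _, rfl⟩ := List.mem_map.mp hg
  by_cases hk : m ≤ (k : ℕ)
  · rw [if_pos hk]; exact zpow_mem (a_mem_H hk) _
  · rw [if_neg hk]; exact one_mem _

lemma T_split (m : ℕ) (x : Fin n → ℤ) (j : Fin n) (hm : m ≤ (j : ℕ)) :
    T t m x = (((List.finRange n).take (j : ℕ)).map
        fun k : Fin n => if m ≤ (k : ℕ) then a n t k ^ x k else 1).prod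
      * a n t j ^ x j * T t ((j : ℕ) + 1) x := by
  set f : Fin n → G n t := fun k : Fin n => if m ≤ (k : ℕ) then a n t k ^ x k else 1 with hf
  have hlen : (j : ℕ) < (List.finRange n).length := by simpa using j.isLt
  have hsplit : List.finRange n
      = (List.finRange n).take (j : ℕ) ++ j :: (List.finRange n).drop ((j : ℕ) + 1) := by
    conv_lhs => rw [← List.take_append_drop (j : ℕ) (List.finRange n)]
    rw [List.drop_eq_getElem_cons hlen, List.getElem_finRange]
    congr 1
  have hdrop : T t ((j : ℕ) + 1) x = (((List.finRange n).drop ((j : ℕ) + 1)).map f).prod := by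
    unfold T
    conv_lhs => rw [← List.take_append_drop ((j : ℕ) + 1) (List.finRange n)]
    rw [List.map_append, List.prod_append]
    have h1 : (((List.finRange n).take ((j : ℕ) + 1)).map
        fun k : Fin n => if (j : ℕ) + 1 ≤ (k : ℕ) then a n t k ^ x k else 1).prod = 1 := by
      apply List.prod_eq_one
      intro g hg
      obtain ⟨k, hk, rfl⟩ := List.mem_map.mp hg
      have := mem_take_lt hk
      rw [if_neg (by omega)]
    rw [h1, one_mul]
    congr 1
    apply List.map_congr_left
    intro k hk
    have hk' := mem_drop_le hk
    rw [if_pos hk', hf]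
    simp only
    rw [if_pos (by omega)]
  conv_lhs => rw [T, ← hf, hsplit]
  rw [List.map_append, List.prod_append, List.map_cons, List.prod_cons, hdrop]
  have hfj : f j = a n t j ^ x j := by rw [hf]; simp only; rw [if_pos hm]
  rw [hfj, ← mul_assoc]

lemma step {m : ℕ} {j : Fin n} (hm : m ≤ (j : ℕ)) (x : Fin n → ℤ) (ε : ℤ)
    (hZ : ∃ z, (a n t j) ^ (-ε) * T t ((j : ℕ) + 1) x * (a n t j) ^ ε = T t ((j : ℕ) + 1) z) :
    ∃ y, T t m x * (a n t j) ^ ε = T t m y := by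
  obtain ⟨z, hz⟩ := hZ
  classical
  set y : Fin n → ℤ := fun k =>
    if (k : ℕ) < (j : ℕ) then x k else if k = j then x j + ε else z k with hy
  refine ⟨y, ?_⟩
  rw [T_split m x j hm, T_split m y j hm]
  have hB : (((List.finRange n).take (j : ℕ)).map
        fun k : Fin n => if m ≤ (k : ℕ) then a n t k ^ y k else 1).prod
      = (((List.finRange n).take (j : ℕ)).map
        fun k : Fin n => if m ≤ (k : ℕ) then a n t k ^ x k else 1).prod := by
    congr 1
    apply List.map_congr_left
    intro k hk
    have hk' := mem_take_lt hk
    rw [hy]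
    simp only [if_pos hk']
  have hyj : y j = x j + ε := by rw [hy]; simp
  have hT : T t ((j : ℕ) + 1) y = T t ((j : ℕ) + 1) z := by
    apply T_congr
    intro k hk
    rw [hy]
    simp only
    rw [if_neg (by omega), if_neg (by intro he; rw [he] at hk; omega)]
  rw [hB, hyj, hT, ← hz]
  rw [zpow_add]
  group

lemma main_lemma (d : ℕ) : ∀ m : ℕ, n - m = d → ∀ g ∈ Hgp t m, ∀ x : Fin n → ℤ,
    ∃ y, T t m x * g = T t m y := by
  induction d using Nat.strong_induction_on with
  | _ d IH =>
  intro m hd g hg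
  have hg' : g ∈ Submonoid.closure
      ({g | ∃ j : Fin n, m ≤ (j : ℕ) ∧ g = a n t j}
        ∪ {g | ∃ j : Fin n, m ≤ (j : ℕ) ∧ g = a n t j}⁻¹) := by
    rw [← Subgroup.closure_toSubmonoid]
    exact hg
  clear hg
  induction hg' using Submonoid.closure_induction with
  | one => intro x; exact ⟨x, by rw [mul_one]⟩
  | mul g1 g2 _ _ h1 h2 =>
    intro x
    obtain ⟨y1, e1⟩ := h1 x
    obtain ⟨y2, e2⟩ := h2 y1
    exact ⟨y2, by rw [← mul_assoc, e1, e2]⟩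
  | mem s hs =>
    intro x
    rcases hs with hs | hs
    · obtain ⟨j, hj, rfl⟩ := hs
      have hZmem : (a n t j)⁻¹ * T t ((j : ℕ) + 1) x * a n t j ∈ Hgp t ((j : ℕ) + 1) := by
        refine conj_mem ?_ _ T_mem
        intro k hk
        have hjk : j < k := by rw [Fin.lt_def]; omega
        rw [inv_inv]
        exact H_le hk (conjNeg hjk)
      have hlt : n - ((j : ℕ) + 1) < d := by have := j.isLt; omega
      obtain ⟨z, hz⟩ := IH _ hlt ((j : ℕ) + 1) rfl _ hZmem (fun _ => 0)
      rw [T_zero, one_mul] at hz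
      have := step hj x 1 ⟨z, by
        rw [zpow_one, zpow_neg, zpow_one]
        exact hz⟩
      simpa [zpow_one] using this
    · rw [Set.mem_inv] at hs
      obtain ⟨j, hj, he⟩ := hs
      have hse : s = (a n t j)⁻¹ := by rw [← he, inv_inv]
      subst hse
      have hZmem : a n t j * T t ((j : ℕ) + 1) x * (a n t j)⁻¹ ∈ Hgp t ((j : ℕ) + 1) := by
        refine conj_mem ?_ _ T_mem
        intro k hk
        have hjk : j < k := by rw [Fin.lt_def]; omega
        exact H_le hk (conjPos _ k rfl j hjk)
      have hlt : n - ((j : ℕ) + 1) < d := by have := j.isLt; omega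
      obtain ⟨z, hz⟩ := IH _ hlt ((j : ℕ) + 1) rfl _ hZmem (fun _ => 0)
      rw [T_zero, one_mul] at hz
      have := step hj x (-1) ⟨z, by
        rw [neg_neg, zpow_one, zpow_neg, zpow_one]
        exact hz⟩
      simpa [zpow_neg, zpow_one] using this

end Aux

/-- Every element of `G(t)` can be written as `a_1^{x_1} ⋯ a_n^{x_n}` for some `x ∈ ℤⁿ`,
i.e. the normal form map `N_t` is surjective. -/
theorem normalForm_surjective (n : ℕ) (t : Fin n → Fin n → Fin n → ℤ) :
    Function.Surjective (N n t) := by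
  intro g
  have hg : g ∈ Hgp t 0 := by
    have htop : (⊤ : Subgroup (G n t)) ≤ Hgp t 0 := by
      rw [← PresentedGroup.closure_range_of (rels n t)]
      apply Subgroup.closure_mono
      rintro gg ⟨i, rfl⟩
      exact ⟨i, Nat.zero_le _, rfl⟩
    exact htop (Subgroup.mem_top g)
  obtain ⟨y, hy⟩ := main_lemma (n - 0) 0 rfl g hg (fun _ => 0)
  rw [T_zero, one_mul] at hy
  refine ⟨y, ?_⟩
  rw [hy]
  unfold N prodPow T
  congr 1

end HallPoly
end

section
/- For every family of integers t = (t_{i,j,k})_{1 ≤ i < j < k ≤ n}, the group G(t) is nilpotent. -/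
namespace HallPoly

lemma map_prodPow {Γ Δ : Type*} [Group Γ] [Group Δ] (f : Γ →* Δ) (n : ℕ)
    (g : Fin n → Γ) (e : Fin n → ℤ) : f (prodPow n g e) = prodPow n (fun i => f (g i)) e := by
  simp [prodPow, ← List.prod_hom _ f, List.map_map, Function.comp_def, map_zpow]

variable {n : ℕ} {t : Fin n → Fin n → Fin n → ℤ}

/-- The descending filtration: subgroup generated by `a_i`, `i ≥ k`. -/
def H (n : ℕ) (t : Fin n → Fin n → Fin n → ℤ) (k : ℕ) : Subgroup (G n t) :=
  Subgroup.closure (a n t '' {i | k ≤ (i : ℕ)})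

lemma H_antitone : Antitone (H n t) := by
  intro k l hkl
  exact Subgroup.closure_mono (Set.image_mono fun i hi => le_trans hkl hi)

lemma H_zero : H n t 0 = ⊤ := by
  have : a n t '' {i | 0 ≤ (i : ℕ)} = Set.range (a n t) := by
    ext x; simp [Set.mem_image]
  rw [H, this]
  exact PresentedGroup.closure_range_of _

lemma H_top (k : ℕ) (hk : n ≤ k) : H n t k = ⊥ := by
  have : a n t '' {i | k ≤ (i : ℕ)} = ∅ := by
    ext x
    simp only [Set.mem_image, Set.mem_empty_iff_false, iff_false]
    rintro ⟨i, hi, -⟩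
    exact absurd (lt_of_lt_of_le i.isLt hk) (not_lt.2 hi)
  rw [H, this, Subgroup.closure_empty]

lemma prodPow_mem (j : Fin n) (e : Fin n → ℤ) (he : ∀ k, ¬ j < k → e k = 0) :
    prodPow n (a n t) e ∈ H n t ((j : ℕ) + 1) := by
  apply Subgroup.list_prod_mem
  intro x hx
  simp only [List.mem_map] at hx
  obtain ⟨k, -, rfl⟩ := hx
  by_cases hjk : j < k
  · refine zpow_mem (Subgroup.subset_closure (Set.mem_image_of_mem _ ?_)) _
    exact hjk
  · rw [he k hjk, zpow_zero]
    exact one_mem _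

lemma rel_eq (i j : Fin n) (hij : i < j) :
    a n t j * a n t i =
      a n t i * a n t j * prodPow n (a n t) (fun k => if j < k then t i j k else 0) := by
  have hr : ((FreeGroup.of i * FreeGroup.of j *
        prodPow n FreeGroup.of (fun k => if j < k then t i j k else 0))⁻¹ *
      (FreeGroup.of j * FreeGroup.of i)) ∈ Subgroup.normalClosure (rels n t) :=
    Subgroup.subset_normalClosure ⟨i, j, hij, rfl⟩
  have h1 : PresentedGroup.mk (rels n t)
      ((FreeGroup.of i * FreeGroup.of j *
        prodPow n FreeGroup.of (fun k => if j < k then t i j k else 0))⁻¹ *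
      (FreeGroup.of j * FreeGroup.of i)) = 1 :=
    (QuotientGroup.eq_one_iff _).2 hr
  have := h1
  rw [map_mul, map_inv, map_mul, map_mul, inv_mul_eq_one] at this
  have h2 := this.symm
  rw [map_prodPow] at h2
  exact h2

/-- Key commutation: the image of a generator `a i` with `k ≤ i` is central
modulo `H (k+1)`. -/
lemma key (d : ℕ) : ∀ k, n ≤ k + d →
    (H n t k).Normal ∧ ∀ x ∈ H n t k, ∀ g : G n t, x * g * x⁻¹ * g⁻¹ ∈ H n t (k + 1) := by
  induction d with
  | zero =>
    intro k hk
    rw [H_top k (by omega)]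
    constructor
    · infer_instance
    · rintro x hx g
      rw [Subgroup.mem_bot] at hx
      subst hx
      simp [Subgroup.one_mem]
  | succ d ih =>
    intro k hk
    by_cases hkn : n ≤ k
    · rw [H_top k hkn]
      constructor
      · infer_instance
      · rintro x hx g
        rw [Subgroup.mem_bot] at hx
        subst hx
        simp [Subgroup.one_mem]
    · push_neg at hkn
      obtain ⟨hN, -⟩ := ih (k + 1) (by omega)
      -- quotient map
      set Nk := H n t (k + 1) with hNk
      let π : G n t →* G n t ⧸ Nk := QuotientGroup.mk' Nk
      have hπ : ∀ w : G n t, w ∈ Nk → π w = 1 := fun w hw =>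
        (QuotientGroup.eq_one_iff w).2 hw
      -- each generator `a i` with `k ≤ i` commutes with every generator mod Nk
      have hcomm : ∀ i : Fin n, k ≤ (i : ℕ) → ∀ m : Fin n,
          π (a n t m) * π (a n t i) = π (a n t i) * π (a n t m) := by
        intro i hi m
        rcases lt_trichotomy m i with hmi | hmi | hmi
        · -- m < i : relation (m, i)
          have h := rel_eq (t := t) m i hmi
          have hw : prodPow n (a n t) (fun l => if i < l then t m i l else 0) ∈ Nk :=
            H_antitone (by omega) (prodPow_mem i _ (by intro l hl; simp [hl]))
          have := congrArg π h
          rw [map_mul, map_mul, map_mul, hπ _ hw, mul_one] at this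
          exact this.symm
        · subst hmi; rfl
        · -- i < m : relation (i, m)
          have h := rel_eq (t := t) i m hmi
          have hw : prodPow n (a n t) (fun l => if m < l then t i m l else 0) ∈ Nk :=
            H_antitone (by omega) (prodPow_mem m _ (by intro l hl; simp [hl]))
          have := congrArg π h
          rw [map_mul, map_mul, map_mul, hπ _ hw, mul_one] at this
          exact this
      -- hence central mod Nk
      have hcentral : ∀ i : Fin n, k ≤ (i : ℕ) → π (a n t i) ∈ Subgroup.center (G n t ⧸ Nk) := by
        intro i hi
        rw [Subgroup.mem_center_iff]
        intro q
        obtain ⟨g, rfl⟩ := QuotientGroup.mk'_surjective Nk q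
        have hg : g ∈ Subgroup.closure (Set.range (a n t)) := by
          rw [show Set.range (a n t) = Set.range (PresentedGroup.of) from rfl,
            PresentedGroup.closure_range_of]
          trivial
        have hmem : g ∈ (Subgroup.centralizer {π (a n t i)}).comap π := by
          refine Subgroup.closure_le ((Subgroup.centralizer {π (a n t i)}).comap π) |>.2 ?_ hg
          rintro x ⟨m, rfl⟩
          rw [SetLike.mem_coe, Subgroup.mem_comap, Subgroup.mem_centralizer_singleton_iff]
          exact hcomm i hi m
        exact Subgroup.mem_centralizer_singleton_iff.1 (Subgroup.mem_comap.1 hmem)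
      -- commutator condition at level k
      have hcond : ∀ x ∈ H n t k, ∀ g : G n t, x * g * x⁻¹ * g⁻¹ ∈ H n t (k + 1) := by
        intro x hx g
        have hx' : x ∈ (Subgroup.center (G n t ⧸ Nk)).comap π := by
          refine Subgroup.closure_le _ |>.2 ?_ hx
          rintro y ⟨i, hi, rfl⟩
          exact hcentral i hi
        have hx'' := Subgroup.mem_center_iff.1 (Subgroup.mem_comap.1 hx')
        have : π (x * g * x⁻¹ * g⁻¹) = 1 := by
          rw [map_mul, map_mul, map_mul, map_inv, map_inv, ← hx'' (π g)]
          group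
        exact (QuotientGroup.eq_one_iff _).1 this
      refine ⟨⟨?_⟩, hcond⟩
      -- normality of H k
      intro x hx g
      have h1 : g * x * g⁻¹ * x⁻¹ ∈ H n t (k + 1) := by
        have := hcond x hx g
        have h2 : (x * g * x⁻¹ * g⁻¹)⁻¹ ∈ H n t (k + 1) := inv_mem this
        simpa [mul_assoc] using h2
      have : g * x * g⁻¹ = (g * x * g⁻¹ * x⁻¹) * x := by group
      rw [this]
      exact mul_mem (H_antitone (by omega) h1) hx

/-- For every family of integers `t = (t_{i,j,k})`, the group `G(t)` is nilpotent. -/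
theorem G_isNilpotent (n : ℕ) (t : Fin n → Fin n → Fin n → ℤ) :
    Group.IsNilpotent (G n t) := by
  rw [nilpotent_iff_finite_descending_central_series]
  refine ⟨n, H n t, ⟨H_zero, ?_⟩, H_top n le_rfl⟩
  intro x k hx g
  exact (key n k (by omega)).2 x hx g

end HallPoly
end

section
/- Let G be a group with a central series G = G_1 ≥ G_2 ≥ ⋯ ≥ G_n ≥ G_{n+1} = {1} and elements g_i ∈ G_i such that each factor G_i/G_{i+1} is infinite cyclic generated by the image of g_i. Then there exists a unique family of integers t = (t_{i,j,k})_{1 ≤ i < j < k ≤ n} such that g_j·g_i = g_i·g_j·g_{j+1}^{t_{i,j,j+1}} ⋯ g_n^{t_{i,j,n}} holds in G for all 1 ≤ i < j ≤ n. -/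
namespace HallPoly

section Aux

variable {Γ : Type*} [Group Γ] {n : ℕ} (g : Fin n → Γ)

/-- The ordered product of `g k ^ e k` over indices `k ≥ m`. -/
def prodFrom (m : ℕ) (e : Fin n → ℤ) : Γ :=
  (((List.finRange n).drop m).map fun k => g k ^ e k).prod

lemma prodFrom_of_ge (m : ℕ) (hm : n ≤ m) (e : Fin n → ℤ) : prodFrom g m e = 1 := by
  unfold prodFrom
  rw [List.drop_eq_nil_of_le (by simpa using hm)]
  simp

lemma prodFrom_succ (m : ℕ) (hm : m < n) (e : Fin n → ℤ) :
    prodFrom g m e = g ⟨m, hm⟩ ^ e ⟨m, hm⟩ * prodFrom g (m + 1) e := by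
  unfold prodFrom
  rw [List.drop_eq_getElem_cons (by simpa using hm), List.map_cons, List.prod_cons,
    List.getElem_finRange]
  rfl

lemma prodFrom_congr : ∀ d m, n ≤ m + d → ∀ e e' : Fin n → ℤ,
    (∀ k : Fin n, m ≤ (k : ℕ) → e k = e' k) → prodFrom g m e = prodFrom g m e' := by
  intro d
  induction d with
  | zero => intro m hm e e' _; rw [prodFrom_of_ge g m (by omega), prodFrom_of_ge g m (by omega)]
  | succ d ih =>
    intro m hm e e' h
    by_cases hmn : m < n
    · rw [prodFrom_succ g m hmn, prodFrom_succ g m hmn, h ⟨m, hmn⟩ le_rfl,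
        ih (m + 1) (by omega) e e' fun k hk => h k (by omega)]
    · rw [prodFrom_of_ge g m (by omega), prodFrom_of_ge g m (by omega)]

lemma prodPow_eq_prodFrom : ∀ m (e : Fin n → ℤ),
    (∀ k : Fin n, (k : ℕ) < m → e k = 0) → prodPow n g e = prodFrom g m e := by
  intro m
  induction m with
  | zero => intro e _; rfl
  | succ m ih =>
    intro e h
    rw [ih e fun k hk => h k (by omega)]
    by_cases hmn : m < n
    · rw [prodFrom_succ g m hmn, h ⟨m, hmn⟩ (Nat.lt_succ_self m)]
      simp
    · rw [prodFrom_of_ge g m (by omega), prodFrom_of_ge g (m + 1) (by omega)]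

variable (H : ℕ → Subgroup Γ) (hdesc : ∀ i : ℕ, i < n → H (i + 1) ≤ H i)
  (hg : ∀ i : Fin n, g i ∈ H (i : ℕ))

include hdesc hg in
lemma prodFrom_mem : ∀ d m, n ≤ m + d → ∀ e : Fin n → ℤ, prodFrom g m e ∈ H m := by
  intro d
  induction d with
  | zero => intro m hm e; rw [prodFrom_of_ge g m (by omega)]; exact one_mem _
  | succ d ih =>
    intro m hm e
    by_cases hmn : m < n
    · rw [prodFrom_succ g m hmn]
      exact mul_mem (zpow_mem (hg ⟨m, hmn⟩) _) (hdesc m hmn (ih (m + 1) (by omega) e))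
    · rw [prodFrom_of_ge g m (by omega)]; exact one_mem _

variable (hHn : H n = ⊥)
  (hcyc : ∀ i : Fin n, Function.Bijective fun m : ℤ =>
      (QuotientGroup.mk ((⟨g i, hg i⟩ : H (i : ℕ)) ^ m) :
        H (i : ℕ) ⧸ (H ((i : ℕ) + 1)).subgroupOf (H (i : ℕ))))

include hdesc hg hHn hcyc in
lemma main : ∀ d m, n = m + d → ∀ x : Γ, x ∈ H m →
    ∃! e : Fin n → ℤ, (∀ k : Fin n, (k : ℕ) < m → e k = 0) ∧ prodFrom g m e = x := by
  intro d
  induction d with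
  | zero =>
    intro m hm x hx
    subst hm
    rw [hHn, Subgroup.mem_bot] at hx
    subst hx
    refine ⟨fun _ => 0, ⟨fun _ _ => rfl, prodFrom_of_ge g _ le_rfl _⟩, ?_⟩
    intro e ⟨he, _⟩
    funext k
    exact he k k.isLt
  | succ d ih =>
    intro m hm x hx
    have hmn : m < n := by omega
    set i : Fin n := ⟨m, hmn⟩ with hi
    obtain ⟨ε, hε0⟩ := (hcyc i).2 (QuotientGroup.mk (⟨x, hx⟩ : H m))
    have hε : (QuotientGroup.mk ((⟨g i, hg i⟩ : H m) ^ ε) :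
        H m ⧸ (H (m + 1)).subgroupOf (H m)) = QuotientGroup.mk ⟨x, hx⟩ := hε0
    have hy : (g i ^ ε)⁻¹ * x ∈ H (m + 1) := by
      have := QuotientGroup.eq.mp hε
      rw [Subgroup.mem_subgroupOf] at this
      simpa using this
    set y : Γ := (g i ^ ε)⁻¹ * x with hydef
    obtain ⟨e', ⟨he's, he'p⟩, he'u⟩ := ih (m + 1) (by omega) y hy
    set e : Fin n → ℤ := fun k => if (k : ℕ) = m then ε else e' k with he
    have hprod : prodFrom g m e = x := by
      rw [prodFrom_succ g m hmn]
      have h1 : e ⟨m, hmn⟩ = ε := if_pos rfl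
      have h2 : prodFrom g (m + 1) e = prodFrom g (m + 1) e' := by
        refine prodFrom_congr g (n - (m + 1)) (m + 1) (by omega) _ _ fun k hk => ?_
        simp only [he]
        rw [if_neg (by omega)]
      rw [h1, h2, he'p, hydef]
      show g i ^ ε * ((g i ^ ε)⁻¹ * x) = x
      group
    refine ⟨e, ⟨fun k hk => by simp only [he]; rw [if_neg (by omega)]; exact he's k (by omega),
      hprod⟩, ?_⟩
    intro e1 ⟨hs1, hp1⟩
    -- first: the exponent at m agrees
    have htail1 : prodFrom g (m + 1) e1 ∈ H (m + 1) :=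
      prodFrom_mem g H hdesc hg (n - (m + 1)) (m + 1) (by omega) e1
    have hsplit1 : g i ^ e1 i * prodFrom g (m + 1) e1 = x := by
      rw [← prodFrom_succ g m hmn, hp1]
    have hq : (QuotientGroup.mk ((⟨g i, hg i⟩ : H m) ^ e1 i) :
        H m ⧸ (H (m + 1)).subgroupOf (H m)) = QuotientGroup.mk ((⟨g i, hg i⟩ : H m) ^ ε) := by
      rw [hε]
      refine QuotientGroup.eq.mpr ?_
      rw [Subgroup.mem_subgroupOf]
      have : ((((⟨g i, hg i⟩ : H m) ^ e1 i)⁻¹ * ⟨x, hx⟩ : H m) : Γ)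
          = prodFrom g (m + 1) e1 := by
        push_cast
        rw [← hsplit1]
        group
      rw [this]
      exact htail1
    have hεi : e1 i = ε := (hcyc i).1 hq
    have htaileq : prodFrom g (m + 1) e1 = y := by
      rw [hydef, ← hsplit1, hεi]
      group
    set e1' : Fin n → ℤ := fun k => if (k : ℕ) = m then 0 else e1 k with he1'
    have h3 : e1' = e' := by
      refine he'u e1' ⟨fun k hk => ?_, ?_⟩
      · simp only [he1']
        by_cases h : (k : ℕ) = m
        · rw [if_pos h]
        · rw [if_neg h]; exact hs1 k (by omega)
      · rw [← htaileq]
        refine prodFrom_congr g (n - (m + 1)) (m + 1) (by omega) _ _ fun k hk => ?_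
        simp only [he1']
        rw [if_neg (by omega)]
    funext k
    by_cases h : (k : ℕ) = m
    · have : k = i := Fin.ext h
      subst this
      have h5 : e i = ε := by simp [he, h]
      rw [h5, hεi]
    · have : e1 k = e1' k := by simp only [he1']; rw [if_neg h]
      rw [this, h3]
      simp only [he]
      rw [if_neg h]

end Aux

/-- If `Γ = H_1 ≥ H_2 ≥ ⋯ ≥ H_n ≥ H_{n+1} = {1}` is a central series (0-based: `H 0 = Γ`,
`H n = {1}`) with elements `g_i ∈ H_i` such that each factor `H_i / H_{i+1}` is infinite
cyclic generated by the image of `g_i`, then there is a unique family of integers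
`t = (t_{i,j,k})_{i < j < k}` with `g_j·g_i = g_i·g_j·g_{j+1}^{t_{i,j,j+1}} ⋯ g_n^{t_{i,j,n}}`
for all `i < j`. -/
theorem exists_unique_structure_constants {Γ : Type*} [Group Γ] (n : ℕ)
    (H : ℕ → Subgroup Γ)
    (hH0 : H 0 = ⊤) (hHn : H n = ⊥)
    (hdesc : ∀ i : ℕ, i < n → H (i + 1) ≤ H i)
    (hnormal : ∀ i : ℕ, (H i).Normal)
    (hcentral : ∀ i : ℕ, i < n → ⁅(⊤ : Subgroup Γ), H i⁆ ≤ H (i + 1))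
    (g : Fin n → Γ) (hg : ∀ i : Fin n, g i ∈ H (i : ℕ))
    (hcyc : ∀ i : Fin n, Function.Bijective fun m : ℤ =>
      (QuotientGroup.mk ((⟨g i, hg i⟩ : H (i : ℕ)) ^ m) :
        H (i : ℕ) ⧸ (H ((i : ℕ) + 1)).subgroupOf (H (i : ℕ)))) :
    ∃ t : Fin n → Fin n → Fin n → ℤ,
      (∀ i j : Fin n, i < j →
        g j * g i = g i * g j * prodPow n g (fun k => if j < k then t i j k else 0)) ∧
      ∀ t' : Fin n → Fin n → Fin n → ℤ,
        (∀ i j : Fin n, i < j →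
          g j * g i = g i * g j * prodPow n g (fun k => if j < k then t' i j k else 0)) →
        ∀ i j k : Fin n, i < j → j < k → t' i j k = t i j k := by
  have key : ∀ i j : Fin n, i < j → ∃! e : Fin n → ℤ,
      (∀ k : Fin n, (k : ℕ) < (j : ℕ) + 1 → e k = 0) ∧
        prodFrom g ((j : ℕ) + 1) e = (g i * g j)⁻¹ * (g j * g i) := by
    intro i j hij
    have hc : (g i * g j)⁻¹ * (g j * g i) ∈ H ((j : ℕ) + 1) := by
      open scoped commutatorElement in
      have h1 : ⁅(g j)⁻¹, (g i)⁻¹⁆ ∈ ⁅H (j : ℕ), (⊤ : Subgroup Γ)⁆ :=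
        Subgroup.commutator_mem_commutator (inv_mem (hg j)) (Subgroup.mem_top _)
      rw [Subgroup.commutator_comm] at h1
      have h2 := hcentral (j : ℕ) j.isLt h1
      open scoped commutatorElement in
      have h3 : (g i * g j)⁻¹ * (g j * g i) = ⁅(g j)⁻¹, (g i)⁻¹⁆ := by
        rw [commutatorElement_def]
        group
      rw [h3]
      exact h2
    exact main g H hdesc hg hHn hcyc (n - ((j : ℕ) + 1)) ((j : ℕ) + 1)
      (by have := j.isLt; omega) _ hc
  refine ⟨fun i j k => if h : i < j then Classical.choose (key i j h) k else 0, ?_, ?_⟩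
  · intro i j hij
    obtain ⟨⟨hsupp, hprod⟩, -⟩ := Classical.choose_spec (key i j hij)
    set e := Classical.choose (key i j hij) with he
    have h1 : prodPow n g (fun k => if j < k then (if h : i < j then e k else 0) else 0)
        = prodFrom g ((j : ℕ) + 1) e := by
      rw [prodPow_eq_prodFrom g ((j : ℕ) + 1) _ fun k hk => by
        rw [if_neg (by rw [Fin.lt_def]; omega)]]
      refine prodFrom_congr g (n - ((j : ℕ) + 1)) ((j : ℕ) + 1) (by omega) _ _ fun k hk => ?_
      rw [if_pos (by rw [Fin.lt_def]; omega), dif_pos hij]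
    rw [h1, hprod]
    group
  · intro t' ht' i j k hij hjk
    obtain ⟨⟨hsupp, hprod⟩, huniq⟩ := Classical.choose_spec (key i j hij)
    set e := Classical.choose (key i j hij) with he
    set e1 : Fin n → ℤ := fun k => if j < k then t' i j k else 0 with he1
    have hp1 : prodFrom g ((j : ℕ) + 1) e1 = (g i * g j)⁻¹ * (g j * g i) := by
      rw [← prodPow_eq_prodFrom g ((j : ℕ) + 1) e1 fun k hk => by
        simp only [he1]; rw [if_neg (by rw [Fin.lt_def]; omega)]]
      rw [ht' i j hij]
      group
      rfl
    have h3 : e1 = e := huniq e1 ⟨fun k hk => by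
      simp only [he1]; rw [if_neg (by rw [Fin.lt_def]; omega)], hp1⟩
    have h4 : e1 k = t' i j k := by simp only [he1]; rw [if_pos hjk]
    rw [← h4, h3]
    show e k = if h : i < j then Classical.choose (key i j h) k else 0
    rw [dif_pos hij, he]
end HallPoly
end

section
/- Let G be a group with a central series G = G_1 ≥ G_2 ≥ ⋯ ≥ G_n ≥ G_{n+1} = {1} and elements g_i ∈ G_i such that each factor G_i/G_{i+1} is infinite cyclic generated by the image of g_i, and let t = (t_{i,j,k})_{1 ≤ i < j < k ≤ n} be a family of integers with g_j·g_i = g_i·g_j·g_{j+1}^{t_{i,j,j+1}} ⋯ g_n^{t_{i,j,n}} in G for all 1 ≤ i < j ≤ n. Then there exists a surjective group homomorphism G(t) → G mapping a_i to g_i for each 1 ≤ i ≤ n. -/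
namespace HallPoly

/-- If `Γ = H_1 ≥ ⋯ ≥ H_{n+1} = {1}` is a central series with infinite cyclic factors
generated by the images of `g_1, …, g_n`, and `t` is a family of integers satisfying
`g_j·g_i = g_i·g_j·g_{j+1}^{t_{i,j,j+1}} ⋯ g_n^{t_{i,j,n}}` for all `i < j`, then there is a
surjective group homomorphism `G(t) → Γ` sending `a_i` to `g_i`. -/
theorem exists_surjective_hom {Γ : Type*} [Group Γ] (n : ℕ)
    (H : ℕ → Subgroup Γ)
    (hH0 : H 0 = ⊤) (hHn : H n = ⊥)
    (hdesc : ∀ i : ℕ, i < n → H (i + 1) ≤ H i)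
    (hnormal : ∀ i : ℕ, (H i).Normal)
    (hcentral : ∀ i : ℕ, i < n → ⁅(⊤ : Subgroup Γ), H i⁆ ≤ H (i + 1))
    (g : Fin n → Γ) (hg : ∀ i : Fin n, g i ∈ H (i : ℕ))
    (hcyc : ∀ i : Fin n, Function.Bijective fun m : ℤ =>
      (QuotientGroup.mk ((⟨g i, hg i⟩ : H (i : ℕ)) ^ m) :
        H (i : ℕ) ⧸ (H ((i : ℕ) + 1)).subgroupOf (H (i : ℕ))))
    (t : Fin n → Fin n → Fin n → ℤ)
    (ht : ∀ i j : Fin n, i < j →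
      g j * g i = g i * g j * prodPow n g (fun k => if j < k then t i j k else 0)) :
    ∃ φ : G n t →* Γ, Function.Surjective φ ∧ ∀ i : Fin n, φ (a n t i) = g i := by
  have hlift : ∀ e : Fin n → ℤ,
      FreeGroup.lift g (prodPow n FreeGroup.of e) = prodPow n g e := by
    intro e
    unfold prodPow
    rw [map_list_prod, List.map_map]
    simp [Function.comp_def, map_zpow]
  have hrel : ∀ r ∈ rels n t, FreeGroup.lift g r = 1 := by
    rintro r ⟨i, j, hij, rfl⟩
    simp only [map_mul, map_inv, FreeGroup.lift_apply_of, hlift]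
    rw [← ht i j hij]
    group
  refine ⟨PresentedGroup.toGroup hrel, ?_, fun i => PresentedGroup.toGroup.of hrel⟩
  set φ := PresentedGroup.toGroup hrel with hφ
  have hφa : ∀ i : Fin n, φ (a n t i) = g i := fun i => PresentedGroup.toGroup.of hrel
  have hrange : ∀ i : Fin n, g i ∈ φ.range := fun i => ⟨a n t i, hφa i⟩
  have key : ∀ j : ℕ, j ≤ n → H (n - j) ≤ φ.range := by
    intro j
    induction j with
    | zero =>
      intro _
      rw [Nat.sub_zero, hHn]
      exact bot_le
    | succ j ih =>
      intro hj x hx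
      have hi : n - (j + 1) < n := by omega
      set i : Fin n := ⟨n - (j + 1), hi⟩ with hidef
      have hx' : x ∈ H (i : ℕ) := hx
      obtain ⟨m, hm⟩ := (hcyc i).2 (QuotientGroup.mk ⟨x, hx'⟩)
      rw [QuotientGroup.eq] at hm
      rw [Subgroup.mem_subgroupOf] at hm
      have hmem : (g i ^ m)⁻¹ * x ∈ H ((i : ℕ) + 1) := by
        simpa using hm
      have h1 : (i : ℕ) + 1 = n - j := by simp [hidef]; omega
      have h2 : (g i ^ m)⁻¹ * x ∈ φ.range := ih (by omega) (h1 ▸ hmem)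
      have : x = g i ^ m * ((g i ^ m)⁻¹ * x) := by group
      rw [this]
      exact mul_mem (zpow_mem (hrange i) m) h2
  intro y
  have : y ∈ φ.range := key n le_rfl (by rw [Nat.sub_self, hH0]; trivial)
  exact this

end HallPoly
end
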